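/- Let Γ be a RAACH with defining graph (H,m) and G = Cay(Γ,S). If x, y ∈ Γ are vertices such that e, x, y are pairwise distinct and pairwise adjacent in G (a 3-cycle containing the identity e), then there exists s ∈ S* with ord(s) = 3 such that {x, y} = {s, s²}. -/

import Mathlib

set_option linter.unusedVariables false

attribute [local instance] Classical.propDecidable

/-- The Cayley graph of a group `G` with respect to a connecting set `T`
(assumed closed under inversion, e.g. a symmetrized generating set). -/
def cayley (G : Type*) [Group G] (T : Set G) : SimpleGraph G where
  Adj x y := x ≠ y ∧ (x⁻¹ * y ∈ T ∨ y⁻¹ * x ∈ T)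
  symm := ⟨fun x y h => ⟨h.1.symm, h.2.symm⟩⟩
  loopless := ⟨fun x h => h.1 rfl⟩

open scoped commutatorElement in
/-- The defining relators of a Right Angled Artin-Coxeter Hybrid: `s ^ (m s) = 1` for every
generator `s` with finite order prescription `m s`, and commutators for edges of `H`. -/
def raachRels {S : Type*} (H : SimpleGraph S) (m : S → ℕ∞) : Set (FreeGroup S) :=
  {r | ∃ (s : S) (k : ℕ), m s = (k : ℕ∞) ∧ r = FreeGroup.of s ^ k} ∪
  {r | ∃ s t : S, H.Adj s t ∧ r = ⁅FreeGroup.of s, FreeGroup.of t⁆}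

/-- The Right Angled Artin-Coxeter Hybrid with defining graph `(H, m)`. -/
abbrev RAACH {S : Type*} (H : SimpleGraph S) (m : S → ℕ∞) : Type _ :=
  PresentedGroup (raachRels H m)

/-- The generator of a RAACH corresponding to `s : S`. -/
def raachGen {S : Type*} (H : SimpleGraph S) (m : S → ℕ∞) (s : S) : RAACH H m :=
  PresentedGroup.of s

/-- The symmetrized generating set `S* = {s, s⁻¹ | s ∈ S}` inside the RAACH. -/
def Sstar {S : Type*} (H : SimpleGraph S) (m : S → ℕ∞) : Set (RAACH H m) :=
  {g | ∃ s : S, g = raachGen H m s ∨ g = (raachGen H m s)⁻¹}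

/-- The Cayley graph `Cay(Γ, S)` of the RAACH `Γ` with defining graph `(H, m)`. -/
def cayRAACH {S : Type*} (H : SimpleGraph S) (m : S → ℕ∞) : SimpleGraph (RAACH H m) :=
  cayley (RAACH H m) (Sstar H m)

open Multiplicative

section Aux

variable {S : Type} (H : SimpleGraph S) (m : S → ℕ∞)

/-- The prescribed power relations hold in the RAACH. -/
lemma raach_pow_eq_one (s : S) (k : ℕ) (hk : m s = (k : ℕ∞)) :
    raachGen H m s ^ k = 1 := by
  have hr : FreeGroup.of s ^ k ∈ raachRels H m := Or.inl ⟨s, k, hk, rfl⟩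
  have h2 : PresentedGroup.mk (raachRels H m) (FreeGroup.of s ^ k) = 1 := by
    exact (QuotientGroup.eq_one_iff (N := Subgroup.normalClosure (raachRels H m)) _).mpr
      (Subgroup.subset_normalClosure hr)
  rw [map_pow] at h2
  exact h2

/-- The coordinate homomorphism onto `ZMod (m t₀).toNat` coming from abelianization. -/
noncomputable def raachPhi (t₀ : S) : RAACH H m →* Multiplicative (ZMod (m t₀).toNat) :=
  PresentedGroup.toGroup
    (f := fun s => ofAdd (if s = t₀ then (1 : ZMod (m t₀).toNat) else 0))
    (by
      rintro r (⟨s, k, hk, rfl⟩ | ⟨s, t, hst, rfl⟩)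
      · rw [map_pow, FreeGroup.lift_apply_of, ← ofAdd_nsmul]
        by_cases h : s = t₀
        · subst h
          have hkk : (m s).toNat = k := by rw [hk]; simp
          simp [nsmul_eq_mul, ← hkk, ZMod.natCast_self]
        · simp [h]
      · rw [map_commutatorElement]
        exact commutatorElement_eq_one_iff_mul_comm.mpr (mul_comm _ _))

lemma raachPhi_zpow (t₀ s : S) (ε : ℤ) :
    raachPhi H m t₀ (raachGen H m s ^ ε) =
      ofAdd ((ε : ZMod (m t₀).toNat) * (if s = t₀ then 1 else 0)) := by
  rw [map_zpow, show raachPhi H m t₀ (raachGen H m s)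
      = ofAdd (if s = t₀ then (1 : ZMod (m t₀).toNat) else 0) from
      PresentedGroup.toGroup.of _, ← ofAdd_zsmul, zsmul_eq_mul]

/-- Evaluating a relation between generator powers at a coordinate. -/
lemma raach_coord_eq (t₀ s t u : S) (ε δ ζ : ℤ)
    (h : raachGen H m s ^ ε * raachGen H m t ^ δ = raachGen H m u ^ ζ) :
    (ε : ZMod (m t₀).toNat) * (if s = t₀ then 1 else 0) +
      (δ : ZMod (m t₀).toNat) * (if t = t₀ then 1 else 0) =
      (ζ : ZMod (m t₀).toNat) * (if u = t₀ then 1 else 0) := by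
  have h2 := congrArg (raachPhi H m t₀) h
  rw [map_mul, raachPhi_zpow, raachPhi_zpow, raachPhi_zpow, ← ofAdd_add] at h2
  exact ofAdd.injective h2

/-- Elements of `S*` (or inverses thereof) are `± 1` powers of generators. -/
lemma raach_mem_form (g : RAACH H m)
    (h : g ∈ Sstar H m ∨ g⁻¹ ∈ Sstar H m) :
    ∃ (s : S) (ε : ℤ), (ε = 1 ∨ ε = -1) ∧ g = raachGen H m s ^ ε := by
  rcases h with ⟨s, hs | hs⟩ | ⟨s, hs | hs⟩
  · exact ⟨s, 1, Or.inl rfl, by simpa using hs⟩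
  · exact ⟨s, -1, Or.inr rfl, by simpa using hs⟩
  · refine ⟨s, -1, Or.inr rfl, ?_⟩
    rw [zpow_neg_one, ← hs, inv_inv]
  · refine ⟨s, 1, Or.inl rfl, ?_⟩
    rw [zpow_one, ← inv_inv g, hs, inv_inv]

lemma raach_unit_ne_zero (n : ℕ) (hn : n = 2 ∨ n = 3 ∨ n = 4 ∨ n = 0)
    (e : ℤ) (he : e = 1 ∨ e = -1) : (e : ZMod n) ≠ 0 := by
  intro h
  rw [ZMod.intCast_zmod_eq_zero_iff_dvd] at h
  rcases hn with rfl|rfl|rfl|rfl <;> rcases he with rfl|rfl <;> omega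

lemma raach_toNat_mem (v : ℕ∞) (hv : v = 2 ∨ v = 3 ∨ v = 4 ∨ v = ⊤) :
    v.toNat = 2 ∨ v.toNat = 3 ∨ v.toNat = 4 ∨ v.toNat = 0 := by
  rcases hv with rfl|rfl|rfl|rfl <;> simp

end Aux

/-- **Triangles in the Cayley graph of a RAACH.** Any 3-cycle through the identity is of the
form `e, s, s²` with `s ∈ S*` of order 3. -/
theorem raach_three_cycles {S : Type} [Fintype S] (H : SimpleGraph S) (m : S → ℕ∞)
    (hm : ∀ s, m s = 2 ∨ m s = 3 ∨ m s = 4 ∨ m s = (⊤ : ℕ∞))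
    (x y : RAACH H m)
    (h1 : (cayRAACH H m).Adj 1 x) (h2 : (cayRAACH H m).Adj x y)
    (h3 : (cayRAACH H m).Adj y 1) :
    ∃ s ∈ Sstar H m, orderOf s = 3 ∧ ({x, y} : Set (RAACH H m)) = {s, s ^ 2} := by
  simp only [cayRAACH, cayley] at h1 h2 h3
  obtain ⟨hx1, hxmem⟩ := h1
  obtain ⟨hxy, hxymem⟩ := h2
  obtain ⟨hy1, hymem⟩ := h3
  -- put the three adjacency witnesses in the form `generator ^ (±1)`
  obtain ⟨s, ε, hε, hxs⟩ : ∃ (s : S) (ε : ℤ), (ε = 1 ∨ ε = -1) ∧ x = raachGen H m s ^ ε := by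
    apply raach_mem_form H m x
    simpa using hxmem
  obtain ⟨t, δ, hδ, hts⟩ : ∃ (t : S) (δ : ℤ), (δ = 1 ∨ δ = -1) ∧
      x⁻¹ * y = raachGen H m t ^ δ := by
    apply raach_mem_form H m (x⁻¹ * y)
    simpa [mul_inv_rev] using hxymem
  obtain ⟨u, ζ, hζ, hus⟩ : ∃ (u : S) (ζ : ℤ), (ζ = 1 ∨ ζ = -1) ∧ y = raachGen H m u ^ ζ := by
    apply raach_mem_form H m y
    simpa [or_comm] using hymem
  have hy : y = x * (x⁻¹ * y) := by group
  have hE : raachGen H m s ^ ε * raachGen H m t ^ δ = raachGen H m u ^ ζ := by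
    rw [← hxs, ← hts, ← hus, ← hy]
  -- Step 1: s = t (via the abelianized coordinate maps)
  have hst : s = t := by
    by_contra hst
    by_cases hut : u = t
    · have hus0 : u ≠ s := by rintro rfl; exact hst hut
      have hts0 : t ≠ s := fun h => hst h.symm
      have hc := raach_coord_eq H m s s t u ε δ ζ hE
      rw [if_pos rfl, if_neg hts0, if_neg hus0] at hc
      simp only [mul_one, mul_zero, add_zero] at hc
      exact raach_unit_ne_zero _ (raach_toNat_mem _ (hm s)) ε hε hc
    · have hc := raach_coord_eq H m t s t u ε δ ζ hE
      rw [if_pos rfl, if_neg hst, if_neg hut] at hc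
      simp only [mul_one, mul_zero, zero_add] at hc
      exact raach_unit_ne_zero _ (raach_toNat_mem _ (hm t)) δ hδ hc
  rw [← hst] at hts hE
  clear hst
  -- Step 2: δ = ε (otherwise y = 1)
  have hde : δ = ε := by
    by_contra hde
    have hdne : δ = -ε := by omega
    apply hy1
    rw [hy, hts, hxs, hdne, ← zpow_add, add_neg_cancel, zpow_zero]
  rw [hde] at hts hE
  clear hde hδ
  -- Step 3: m s ≠ 2 (otherwise y = 1)
  have hms2 : m s ≠ 2 := by
    intro hms
    apply hy1
    have hsq : raachGen H m s ^ (2 : ℕ) = 1 :=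
      raach_pow_eq_one H m s 2 (by rw [hms]; norm_num)
    rw [hy, hts, hxs, ← zpow_add, show ε + ε = (2 : ℕ) * ε by push_cast; ring, zpow_mul,
      zpow_natCast, hsq, one_zpow]
  have hm34 : (m s).toNat = 3 ∨ (m s).toNat = 4 ∨ (m s).toNat = 0 := by
    rcases hm s with h|h|h|h
    · exact absurd h hms2
    · left; rw [h]; simp
    · right; left; rw [h]; simp
    · right; right; rw [h]; simp
  -- Step 4: u = s
  have hus' : u = s := by
    by_contra hus'
    have hc := raach_coord_eq H m s s s u ε ε ζ hE
    rw [if_pos rfl, if_neg hus'] at hc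
    simp only [mul_one, mul_zero] at hc
    have hc2 : ((ε + ε : ℤ) : ZMod (m s).toNat) = 0 := by push_cast; rw [hc]
    rw [ZMod.intCast_zmod_eq_zero_iff_dvd] at hc2
    rcases hm34 with h|h|h <;> rw [h] at hc2 <;> rcases hε with rfl|rfl <;> omega
  rw [hus'] at hus hE
  clear hus'
  -- Step 5: m s = 3
  have hc := raach_coord_eq H m s s s s ε ε ζ hE
  rw [if_pos rfl] at hc
  simp only [mul_one] at hc
  have hc2 : ((ε + ε - ζ : ℤ) : ZMod (m s).toNat) = 0 := by push_cast; rw [hc]; ring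
  rw [ZMod.intCast_zmod_eq_zero_iff_dvd] at hc2
  have hm3 : (m s).toNat = 3 := by
    rcases hm34 with h|h|h
    · exact h
    · exfalso; rw [h] at hc2; rcases hε with rfl|rfl <;> rcases hζ with rfl|rfl <;> omega
    · exfalso; rw [h] at hc2; rcases hε with rfl|rfl <;> rcases hζ with rfl|rfl <;> omega
  have hms3 : m s = (3 : ℕ∞) := by
    rcases hm s with h|h|h|h
    · exact absurd h hms2
    · exact h
    · exfalso; rw [h] at hm3; simp at hm3
    · exfalso; rw [h] at hm3; simp at hm3
  -- Conclusion: take a = x = (raachGen s) ^ ε, of order 3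
  have hcube : raachGen H m s ^ (3 : ℕ) = 1 :=
    raach_pow_eq_one H m s 3 (by rw [hms3]; norm_num)
  have hgne : raachGen H m s ≠ 1 := by
    intro h
    apply hx1
    rw [hxs, h, one_zpow]
  haveI : Fact (Nat.Prime 3) := ⟨by norm_num⟩
  have hgord : orderOf (raachGen H m s) = 3 := orderOf_eq_prime hcube hgne
  refine ⟨raachGen H m s ^ ε, ?_, ?_, ?_⟩
  · rcases hε with rfl|rfl
    · exact ⟨s, Or.inl (by simp)⟩
    · exact ⟨s, Or.inr (by simp)⟩
  · rcases hε with rfl|rfl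
    · rw [zpow_one]; exact hgord
    · rw [zpow_neg_one, orderOf_inv]; exact hgord
  · have hy2 : y = raachGen H m s ^ ε * raachGen H m s ^ ε := by
      rw [hy, hts, hxs]
    rw [hxs, hy2, ← pow_two]
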